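/- 1 - δ, where δ = 1 - log₂ e + log₂ log₂ e, is the greatest real constant c such that for every integer n ≥ 1, n·⌈log₂ n⌉ - 2^⌈log₂ n⌉ + 1 < n·log₂ n - c·n + 1. -/

import Mathlib

open Real intervalIntegral MeasureTheory

noncomputable def BB (m p q : ℕ) : ℝ :=
  ∫ x in (0:ℝ)..(m:ℝ), x ^ p * ((m:ℝ) - x) ^ q * Real.exp x

lemma BB_zero (m : ℕ) : BB m 0 0 = Real.exp m - 1 := by
  simp [BB, integral_exp]

lemma BB_hasDeriv (m p q : ℕ) (x : ℝ) :
    HasDerivAt (fun x : ℝ => x ^ p * ((m:ℝ) - x) ^ q * Real.exp x)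
      ((((p:ℝ) * x ^ (p-1) * ((m:ℝ) - x) ^ q
        + x ^ p * ((q:ℝ) * ((m:ℝ) - x) ^ (q-1) * (-1)))
        + x ^ p * ((m:ℝ) - x) ^ q) * Real.exp x) x := by
  have h1 : HasDerivAt (fun x : ℝ => x ^ p) ((p:ℝ) * x ^ (p-1)) x := hasDerivAt_pow p x
  have h2 : HasDerivAt (fun x : ℝ => ((m:ℝ) - x)) (-1) x := by
    simpa using (hasDerivAt_id x).const_sub (m:ℝ)
  have h3 : HasDerivAt (fun x : ℝ => ((m:ℝ) - x) ^ q) ((q:ℝ) * ((m:ℝ) - x) ^ (q-1) * (-1)) x :=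
    h2.pow q
  have h4 := (h1.mul h3).mul (Real.hasDerivAt_exp x)
  refine h4.congr_deriv ?_
  simp only [Pi.mul_apply]
  ring

lemma BB_split (m : ℕ) (c1 c2 : ℝ) (p1 q1 p2 q2 p3 q3 : ℕ) :
    (∫ x in (0:ℝ)..(m:ℝ), (c1 * (x^p1 * ((m:ℝ)-x)^q1) + c2 * (x^p2 * ((m:ℝ)-x)^q2)
        + x^p3 * ((m:ℝ)-x)^q3) * Real.exp x)
      = c1 * BB m p1 q1 + c2 * BB m p2 q2 + BB m p3 q3 := by
  rw [show (fun x : ℝ => (c1 * (x^p1 * ((m:ℝ)-x)^q1) + c2 * (x^p2 * ((m:ℝ)-x)^q2)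
        + x^p3 * ((m:ℝ)-x)^q3) * Real.exp x)
      = fun x : ℝ => c1 * (x^p1 * ((m:ℝ)-x)^q1 * Real.exp x)
        + (c2 * (x^p2 * ((m:ℝ)-x)^q2 * Real.exp x) + (x^p3 * ((m:ℝ)-x)^q3 * Real.exp x))
      from funext fun x => by ring]
  rw [intervalIntegral.integral_add (by apply Continuous.intervalIntegrable; fun_prop)
      (by apply Continuous.intervalIntegrable; fun_prop),
     intervalIntegral.integral_add (by apply Continuous.intervalIntegrable; fun_prop)
      (by apply Continuous.intervalIntegrable; fun_prop),
     intervalIntegral.integral_const_mul, intervalIntegral.integral_const_mul]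
  rw [BB, BB, BB]
  ring

lemma BB_ibp_gen (m : ℕ) (c1 c2 : ℝ) (p1 q1 p2 q2 p3 q3 : ℕ)
    (h : ∀ x : ℝ, HasDerivAt (fun x : ℝ => x ^ p3 * ((m:ℝ) - x) ^ q3 * Real.exp x)
      ((c1 * (x^p1 * ((m:ℝ)-x)^q1) + c2 * (x^p2 * ((m:ℝ)-x)^q2)
        + x^p3 * ((m:ℝ)-x)^q3) * Real.exp x) x) :
    c1 * BB m p1 q1 + c2 * BB m p2 q2 + BB m p3 q3
      = (m:ℝ)^p3 * ((m:ℝ)-(m:ℝ))^q3 * Real.exp m - (0:ℝ)^p3 * (m:ℝ)^q3 := by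
  have key := intervalIntegral.integral_eq_sub_of_hasDerivAt (a := (0:ℝ)) (b := (m:ℝ))
    (fun x _ => h x) (by apply Continuous.intervalIntegrable; fun_prop)
  rw [BB_split] at key
  rw [key]
  norm_num

lemma BB_recP (m p : ℕ) : BB m (p+1) 0 = (m:ℝ)^(p+1) * Real.exp m - ((p:ℝ)+1) * BB m p 0 := by
  have := BB_ibp_gen m ((p:ℝ)+1) 0 p 0 0 0 (p+1) 0 (fun x => by
    have h := BB_hasDeriv m (p+1) 0 x
    simp only [Nat.add_sub_cancel] at h
    convert h using 1
    push_cast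
    ring)
  simp only [zero_mul, add_zero, sub_self, zero_pow (Nat.succ_ne_zero p), pow_zero, mul_one] at this
  linarith [this]

lemma BB_recQ (m q : ℕ) : BB m 0 (q+1) = ((q:ℝ)+1) * BB m 0 q - (m:ℝ)^(q+1) := by
  have := BB_ibp_gen m (-((q:ℝ)+1)) 0 0 q 0 0 0 (q+1) (fun x => by
    have h := BB_hasDeriv m 0 (q+1) x
    simp only [Nat.add_sub_cancel] at h
    convert h using 1
    push_cast
    ring)
  simp only [zero_mul, add_zero, sub_self, zero_pow (Nat.succ_ne_zero q), pow_zero, one_mul,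
    zero_mul, mul_one] at this
  linarith [this]

lemma BB_rec (m p q : ℕ) :
    BB m (p+1) (q+1) = ((q:ℝ)+1) * BB m (p+1) q - ((p:ℝ)+1) * BB m p (q+1) := by
  have := BB_ibp_gen m ((p:ℝ)+1) (-((q:ℝ)+1)) p (q+1) (p+1) q (p+1) (q+1) (fun x => by
    have h := BB_hasDeriv m (p+1) (q+1) x
    simp only [Nat.add_sub_cancel] at h
    convert h using 1
    push_cast
    ring)
  simp only [sub_self, zero_pow (Nat.succ_ne_zero q), zero_pow (Nat.succ_ne_zero p),
    mul_zero, zero_mul, sub_zero, mul_one] at this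
  linarith [this]

lemma BB_int (m : ℕ) : ∀ p q : ℕ, ∃ r s : ℤ,
    BB m p q = (p.factorial : ℝ) * r + Real.exp m * ((q.factorial : ℝ) * s) := by
  intro p
  induction p with
  | zero =>
    intro q
    induction q with
    | zero => exact ⟨-1, 1, by rw [BB_zero]; simp [Nat.factorial_zero]; ring⟩
    | succ q ih =>
      obtain ⟨r, s, h⟩ := ih
      refine ⟨(q+1) * r - (m:ℤ)^(q+1), s, ?_⟩
      rw [BB_recQ, h]
      push_cast [Nat.factorial_succ, Nat.factorial_zero]
      ring
  | succ p ihp =>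
    intro q
    induction q with
    | zero =>
      obtain ⟨r, s, h⟩ := ihp 0
      refine ⟨-r, (m:ℤ)^(p+1) - (p+1) * s, ?_⟩
      rw [BB_recP, h]
      push_cast [Nat.factorial_succ, Nat.factorial_zero]
      ring
    | succ q ihq =>
      obtain ⟨r1, s1, h1⟩ := ihq
      obtain ⟨r2, s2, h2⟩ := ihp (q+1)
      refine ⟨(q+1) * r1 - r2, s1 - (p+1) * s2, ?_⟩
      rw [BB_rec, h1, h2]
      push_cast [Nat.factorial_succ, Nat.factorial_zero]
      ring

lemma BB_pos (m n : ℕ) (hm : 1 ≤ m) : 0 < BB m n n := by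
  apply intervalIntegral.intervalIntegral_pos_of_pos_on
    (by apply Continuous.intervalIntegrable; fun_prop)
  · intro x hx
    have h1 : 0 < x := hx.1
    have h2 : x < m := hx.2
    have : 0 < (m:ℝ) - x := by linarith
    positivity
  · exact_mod_cast Nat.pos_of_ne_zero (by omega)

lemma BB_le (m n : ℕ) : BB m n n ≤ (m:ℝ) * ((m:ℝ)^n * (m:ℝ)^n * Real.exp m) := by
  have hm0 : (0:ℝ) ≤ (m:ℝ) := Nat.cast_nonneg m
  calc BB m n n ≤ ∫ _x in (0:ℝ)..(m:ℝ), (m:ℝ)^n * (m:ℝ)^n * Real.exp m := by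
        apply intervalIntegral.integral_mono_on hm0
          (by apply Continuous.intervalIntegrable; fun_prop)
          (by apply Continuous.intervalIntegrable; fun_prop)
        intro x hx
        have h1 : 0 ≤ x := hx.1
        have h2 : x ≤ m := hx.2
        have h3 : (0:ℝ) ≤ (m:ℝ) - x := by linarith
        have e1 : x ^ n ≤ (m:ℝ)^n := pow_le_pow_left₀ h1 h2 n
        have e2 : ((m:ℝ) - x) ^ n ≤ (m:ℝ)^n := pow_le_pow_left₀ h3 (by linarith) n
        have e3 : Real.exp x ≤ Real.exp m := Real.exp_le_exp.mpr h2
        have := mul_le_mul (mul_le_mul e1 e2 (by positivity) (by positivity)) e3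
          (Real.exp_pos x).le (by positivity)
        linarith [this]
    _ = (m:ℝ) * ((m:ℝ)^n * (m:ℝ)^n * Real.exp m) := by
        rw [intervalIntegral.integral_const]
        simp [smul_eq_mul]

lemma exp_nat_ne_nat (m : ℕ) (hm : 1 ≤ m) (N : ℕ) : Real.exp m ≠ (N : ℝ) := by
  intro hN
  -- choose n with m^(2n+1) * exp m < n!
  have hlim := FloorSemiring.tendsto_pow_div_factorial_atTop (K := ℝ) ((m:ℝ)^2)
  have hε : (0:ℝ) < 1 / ((m:ℝ) * Real.exp m) := by positivity
  obtain ⟨n, hn⟩ := ((hlim.eventually (gt_mem_nhds hε)).and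
    (Filter.eventually_atTop.mpr ⟨1, fun n h => h⟩)).exists
  have hfac : (0:ℝ) < (n.factorial : ℝ) := by exact_mod_cast Nat.factorial_pos n
  have hbound : (m:ℝ) * ((m:ℝ)^n * (m:ℝ)^n * Real.exp m) < (n.factorial : ℝ) := by
    have h1 : ((m:ℝ)^2)^n / (n.factorial : ℝ) < 1 / ((m:ℝ) * Real.exp m) := hn.1
    rw [div_lt_div_iff₀ hfac (by positivity)] at h1
    calc (m:ℝ) * ((m:ℝ)^n * (m:ℝ)^n * Real.exp m)
        = ((m:ℝ)^2)^n * ((m:ℝ) * Real.exp m) := by ring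
      _ < 1 * (n.factorial : ℝ) := h1
      _ = (n.factorial : ℝ) := one_mul _
  obtain ⟨r, s, hrs⟩ := BB_int m n n
  have hpos := BB_pos m n hm
  have hle := BB_le m n
  rw [hN] at hrs
  have hB : BB m n n = (n.factorial : ℝ) * ((r + N * s : ℤ) : ℝ) := by
    rw [hrs]; push_cast; ring
  have hint : (0:ℤ) < r + N * s := by
    by_contra hc
    push_neg at hc
    have : ((r + N * s : ℤ) : ℝ) ≤ 0 := by exact_mod_cast hc
    nlinarith [hB, hpos]
  have : (1:ℝ) ≤ ((r + N * s : ℤ) : ℝ) := by exact_mod_cast hint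
  have : (n.factorial : ℝ) ≤ BB m n n := by
    rw [hB]
    nlinarith
  linarith


lemma log_two_ne_div (n k : ℕ) (hn : 1 ≤ n) : (2:ℝ)^k * Real.log 2 ≠ (n:ℝ) := by
  intro h
  have h2 : Real.exp n = ((2^(2^k) : ℕ) : ℝ) := by
    rw [← h]
    have : ((2^k : ℕ) : ℝ) = (2:ℝ)^k := by push_cast; ring
    rw [← this, Real.exp_nat_mul, Real.exp_log two_pos]
    push_cast
    ring
  exact exp_nat_ne_nat n hn (2^(2^k)) h2

noncomputable def delta : ℝ :=
  1 - Real.logb 2 (Real.exp 1) + Real.logb 2 (Real.logb 2 (Real.exp 1))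

lemma one_sub_delta : 1 - delta = 1 / Real.log 2 + Real.log (Real.log 2) / Real.log 2 := by
  have hL : (0:ℝ) < Real.log 2 := Real.log_pos one_lt_two
  simp only [delta, Real.logb, Real.log_exp]
  rw [Real.log_div one_ne_zero hL.ne', Real.log_one]
  ring

-- core strict inequality
lemma key_ineq (t : ℝ) (ht : 0 < t) (hne : t * Real.log 2 ≠ 1) :
    1 - delta < t - Real.logb 2 t := by
  have hL : (0:ℝ) < Real.log 2 := Real.log_pos one_lt_two
  have hx : Real.log (t * Real.log 2) < t * Real.log 2 - 1 :=
    Real.log_lt_sub_one_of_pos (by positivity) hne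
  rw [Real.log_mul ht.ne' hL.ne'] at hx
  rw [one_sub_delta, Real.logb]
  rw [← add_div, sub_div' hL.ne', div_lt_div_iff_of_pos_right hL]
  linarith

lemma logb_t (n k : ℕ) (hn : 1 ≤ n) :
    Real.logb 2 ((2:ℝ)^k / n) = (k : ℝ) - Real.logb 2 n := by
  have hn0 : (n:ℝ) ≠ 0 := by positivity
  rw [Real.logb_div (by positivity) hn0, Real.logb_pow]
  rw [Real.logb_self_eq_one] <;> norm_num

lemma mem_ineq (n : ℕ) (hn : 1 ≤ n) :
    (n : ℝ) * Nat.clog 2 n - 2 ^ Nat.clog 2 n + 1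
      < (n : ℝ) * Real.logb 2 n - (1 - delta) * n + 1 := by
  set k := Nat.clog 2 n with hk
  have hnR : (0:ℝ) < n := by exact_mod_cast hn
  set t : ℝ := (2:ℝ)^k / n with htdef
  have ht : 0 < t := by positivity
  have htne : t * Real.log 2 ≠ 1 := by
    intro h
    apply log_two_ne_div n k hn
    rw [htdef] at h
    field_simp at h
    linarith [h]
  have hkey := key_ineq t ht htne
  rw [logb_t n k hn] at hkey
  have h2 := mul_lt_mul_of_pos_right hkey hnR
  have hcanc : t * (n:ℝ) = (2:ℝ)^k := by
    rw [htdef]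
    field_simp
  nlinarith [h2]

lemma upper_bound (c : ℝ)
    (hc : ∀ n : ℕ, 1 ≤ n →
      (n : ℝ) * Nat.clog 2 n - 2 ^ Nat.clog 2 n + 1
        < (n : ℝ) * Real.logb 2 n - c * n + 1) :
    c ≤ 1 - delta := by
  by_contra hcon
  push_neg at hcon
  set L : ℝ := Real.log 2 with hLdef
  have hL : (0:ℝ) < L := Real.log_pos one_lt_two
  have hL2 : (1:ℝ)/2 < L := by
    have := Real.log_two_gt_d9; rw [← hLdef] at this; linarith
  have hL1 : L < 1 := by
    have := Real.log_two_lt_d9; rw [← hLdef] at this; linarith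
  set d : ℝ := c - (1 - delta) with hd
  have hdpos : 0 < d := by simp [hd]; linarith
  obtain ⟨k, hk⟩ := pow_unbounded_of_one_lt (8 / d) (one_lt_two (α := ℝ))
  set K : ℕ := k + 1 with hK
  set X : ℝ := (2:ℝ)^K with hX
  have hXpos : 0 < X := by positivity
  have hKX : 8 / d < X := by
    have : (2:ℝ)^k < X := by
      rw [hX, hK]
      exact pow_lt_pow_right₀ one_lt_two (by omega)
    linarith
  have h8 : 8 / X < d := by
    rw [div_lt_iff₀ hXpos]
    rw [div_lt_iff₀ hdpos] at hKX
    linarith [hKX]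
  -- choose n
  set n : ℕ := Nat.ceil (X * L) with hn
  have hxL : 0 < X * L := by positivity
  have hn1 : 1 ≤ n := Nat.one_le_iff_ne_zero.mpr (by
    have : 0 < n := Nat.ceil_pos.mpr hxL
    omega)
  have hnR : (0:ℝ) < n := by exact_mod_cast hn1
  have hn0 : (n:ℝ) ≠ 0 := hnR.ne'
  have hge : X * L ≤ (n:ℝ) := Nat.le_ceil _
  have hlt : (n:ℝ) < X * L + 1 := Nat.ceil_lt_add_one hxL.le
  have hle2 : n ≤ 2^K := by
    rw [hn]
    apply Nat.ceil_le.mpr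
    push_cast
    rw [← hX]
    nlinarith
  have hgt : 2^k < n := by
    rw [hn]
    apply Nat.lt_ceil.mpr
    push_cast
    have : X = 2 * (2:ℝ)^k := by rw [hX, hK]; ring
    nlinarith
  have hclog : Nat.clog 2 n = K := by
    have h1 : Nat.clog 2 n ≤ K := (Nat.clog_le_iff_le_pow (by norm_num)).mpr hle2
    have h2 : k < Nat.clog 2 n := (Nat.lt_clog_iff_pow_lt (by norm_num)).mpr hgt
    omega
  have hnleX : (n:ℝ) ≤ X := by
    rw [hX]
    exact_mod_cast hle2
  -- the inequality from hc
  have hineq := hc n hn1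
  rw [hclog] at hineq
  set t : ℝ := X / n with htdef
  have ht : 0 < t := by positivity
  have ht1 : 1 ≤ t := (one_le_div hnR).mpr hnleX
  have htle : t ≤ 1 / L := by
    rw [htdef, div_le_div_iff₀ hnR hL]
    linarith
  have tlow : 1 / L - t < 4 / X := by
    rw [htdef, div_sub_div _ _ hL.ne' hn0, div_lt_div_iff₀ (by positivity) hXpos]
    nlinarith
  -- c < t - logb 2 t
  have hXK : X = (2:ℝ)^K := hX
  have hcanc : X / (n:ℝ) * (n:ℝ) = X := div_mul_cancel₀ _ hn0
  have expand : (Real.logb 2 n - (K:ℝ) + X/(n:ℝ)) * (n:ℝ)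
      = (n:ℝ) * Real.logb 2 n - (K:ℝ)*(n:ℝ) + X := by
    field_simp
  have h3 : c * (n:ℝ) < (Real.logb 2 n - (K:ℝ) + X/(n:ℝ)) * (n:ℝ) := by
    rw [expand]
    rw [← hXK] at hineq
    linarith
  have h4 : c < Real.logb 2 n - (K:ℝ) + X/(n:ℝ) := (mul_lt_mul_iff_left₀ hnR).mp h3
  have hlogbt : Real.logb 2 t = (K:ℝ) - Real.logb 2 n := by
    rw [htdef, hXK]
    exact logb_t n K hn1
  have h5 : c < t - Real.logb 2 t := by
    rw [hlogbt, htdef]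
    linarith
  -- bound t - logb 2 t
  have hBlog : Real.log (1/L) - Real.log t ≤ (1/L)/t - 1 := by
    have h := Real.log_le_sub_one_of_pos (show (0:ℝ) < (1/L)/t by positivity)
    rwa [Real.log_div (by positivity : (1:ℝ)/L ≠ 0) ht.ne'] at h
  have hBlog2 : -Real.log L - Real.log t ≤ (1/L)/t - 1 := by
    rw [Real.log_div one_ne_zero hL.ne', Real.log_one] at hBlog
    linarith
  have hfrac : (1/L)/t - 1 = (1/L - t)/t := by field_simp
  have hfrac2 : (1/L - t)/t ≤ 1/L - t := div_le_self (by linarith) ht1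
  have htL : t * L ≤ 1 := (le_div_iff₀ hL).mp htle
  have h48 : 4/X ≤ 8*L/X := by gcongr; linarith
  have h2num : t*L - Real.log t < 1 + Real.log L + 8*L/X := by
    linarith [hBlog2, hfrac2, tlow, htL, h48, hfrac]
  have h6 : t - Real.log t / L < 1/L + Real.log L/L + 8/X := by
    have e1 : t - Real.log t / L = (t*L - Real.log t)/L := by field_simp
    have e3 : (8*L/X)/L = 8/X := by
      rw [div_div, mul_comm X L, ← div_div, mul_div_assoc, div_self hL.ne', mul_one]
    have e2 : (1 + Real.log L + 8*L/X)/L = (1:ℝ)/L + Real.log L/L + 8/X := by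
      rw [add_div, add_div, e3]
    rw [e1, ← e2, div_lt_div_iff_of_pos_right hL]
    exact h2num
  have h7 : t - Real.logb 2 t < (1 - delta) + 8/X := by
    rw [Real.logb, ← hLdef, one_sub_delta, ← hLdef]
    linarith
  linarith [h5, h7, h8]


theorem greatest_constant :
    IsGreatest
      {c : ℝ | ∀ n : ℕ, 1 ≤ n →
        (n : ℝ) * Nat.clog 2 n - 2 ^ Nat.clog 2 n + 1
          < (n : ℝ) * Real.logb 2 n - c * n + 1}
      (1 - delta) := by
  constructor
  · intro n hn
    exact mem_ineq n hn
  · intro c hc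
    exact upper_bound c hc
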